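/- Let ℓ ≥ 3 be an integer and let (μ, d) ∈ U^(0). Then the following are equivalent: (a) there exist an integer m ≥ 1, an element (η, a) ∈ U^(1), an element (ζ, b) ∈ U^(−1) and an element (μ', c) ∈ U^(0) such that m·μ = η + ζ + μ' (pointwise on Fin N) and m·d = a + b + c; (b) Σ_{i ∈ Fin N} μ(i) < ℓ·d, or μ(i) > 0 for every i ∈ Fin N. (This is the monomial-level form of the theorem that the radical of the trace of the canonical module of the Ehrhart ring of the stable set polytope of the (2ℓ+1)-cycle equals the intersection of the 2ℓ+1 prime ideals p_0, …, p_{2ℓ}, where p_i is spanned by the monomials T^μ with μ(v_i) > 0 or Σμ < ℓ·d.) -/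

import Mathlib

/-- `(μ, d)` belongs to `U^(n)` for the cycle of length `2ℓ+1`. -/
def inU (ℓ : ℕ) (n : ℤ) (μ : Fin (2 * ℓ + 1) → ℤ) (d : ℤ) : Prop :=
  (∀ i, n ≤ μ i) ∧
  (∀ i : Fin (2 * ℓ + 1), μ i + μ (i + 1) ≤ d - n) ∧
  (∑ i, μ i ≤ (ℓ : ℤ) * d - n)

/-- Splitting a sum over `range (2L+1)` into the first term and `L` consecutive pairs. -/
lemma pair_sum (g : ℕ → ℤ) (L : ℕ) :
    ∑ j ∈ Finset.range (2 * L + 1), g j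
      = g 0 + ∑ k ∈ Finset.range L, (g (2 * k + 1) + g (2 * k + 2)) := by
  induction L with
  | zero => simp
  | succ n ih =>
    have h2 : 2 * (n + 1) + 1 = (2 * n + 1) + 1 + 1 := by ring
    have h3 : 2 * n + 1 + 1 = 2 * n + 2 := by omega
    rw [h2, Finset.sum_range_succ, Finset.sum_range_succ, ih, Finset.sum_range_succ, h3]
    ring

open Fin.NatCast

theorem stmt_0 (ℓ : ℕ) (hℓ : 3 ≤ ℓ) (μ : Fin (2 * ℓ + 1) → ℤ) (d : ℤ)
    (hμ : inU ℓ 0 μ d) :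
    (∃ m : ℕ, 1 ≤ m ∧
      ∃ (η : Fin (2 * ℓ + 1) → ℤ) (a : ℤ) (ζ : Fin (2 * ℓ + 1) → ℤ) (b : ℤ)
        (μ' : Fin (2 * ℓ + 1) → ℤ) (c : ℤ),
        inU ℓ 1 η a ∧ inU ℓ (-1) ζ b ∧ inU ℓ 0 μ' c ∧
        (∀ i, (m : ℤ) * μ i = η i + ζ i + μ' i) ∧ (m : ℤ) * d = a + b + c) ↔
    ((∑ i, μ i < (ℓ : ℤ) * d) ∨ (∀ i, 0 < μ i)) := by
  have hL : (3 : ℤ) ≤ (ℓ : ℤ) := by exact_mod_cast hℓ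
  obtain ⟨hμ1, hμ2, hμ3⟩ := hμ
  have hcard : (Finset.univ : Finset (Fin (2 * ℓ + 1))).card = 2 * ℓ + 1 := by simp
  constructor
  · rintro ⟨m, hm, η, a, ζ, b, μ', c, hη, hζ, hμ', hvec, hd⟩
    by_contra hcon
    push_neg at hcon
    obtain ⟨hsum, i₀, hi₀⟩ := hcon
    have hμsum : ∑ i, μ i = (ℓ : ℤ) * d := le_antisymm (by linarith) hsum
    have hμ0 : μ i₀ = 0 := le_antisymm hi₀ (by have := hμ1 i₀; linarith)
    -- sum of the decomposition
    have hS : (m : ℤ) * ∑ i, μ i = ∑ i, η i + ∑ i, ζ i + ∑ i, μ' i := by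
      rw [Finset.mul_sum, ← Finset.sum_add_distrib, ← Finset.sum_add_distrib]
      exact Finset.sum_congr rfl fun i _ => hvec i
    have hld : (m : ℤ) * ∑ i, μ i = (ℓ : ℤ) * (a + b + c) := by
      rw [hμsum, ← hd]; ring
    have hηsum : ∑ i, η i = (ℓ : ℤ) * a - 1 := by
      have h1 := hη.2.2; have h2 := hζ.2.2; have h3 := hμ'.2.2
      have hle : ∑ i, η i ≤ (ℓ : ℤ) * a - 1 := by linarith
      linarith
    have hηi₀ : η i₀ = 1 := by
      have hv := hvec i₀
      rw [hμ0] at hv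
      have := hη.1 i₀; have := hζ.1 i₀; have := hμ'.1 i₀
      linarith
    -- pairing bound : ∑ η ≤ 1 + ℓ * (a - 1)
    set g : ℕ → ℤ := fun j => η (i₀ + (j : Fin (2 * ℓ + 1))) with hg
    have h1 : ∑ i, η i = ∑ j ∈ Finset.range (2 * ℓ + 1), g j := by
      rw [← Fin.sum_univ_eq_sum_range]
      rw [← Equiv.sum_comp (Equiv.addLeft i₀) η]
      refine Finset.sum_congr rfl fun j _ => ?_
      simp [hg, Fin.cast_val_eq_self]
    have hg0 : g 0 = 1 := by simp [hg, hηi₀]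
    have hpair : ∀ k ∈ Finset.range ℓ, g (2 * k + 1) + g (2 * k + 2) ≤ a - 1 := by
      intro k _
      have hadj := hη.2.1 (i₀ + ((2 * k + 1 : ℕ) : Fin (2 * ℓ + 1)))
      have hcast : (i₀ + ((2 * k + 1 : ℕ) : Fin (2 * ℓ + 1))) + 1
          = i₀ + ((2 * k + 2 : ℕ) : Fin (2 * ℓ + 1)) := by rw [add_assoc, ← Nat.cast_succ]
      rw [hcast] at hadj
      exact hadj
    have key : ∑ i, η i ≤ 1 + (ℓ : ℤ) * (a - 1) := by
      rw [h1, pair_sum g ℓ, hg0]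
      have := Finset.sum_le_sum hpair
      have hconst : ∑ _k ∈ Finset.range ℓ, (a - 1) = (ℓ : ℤ) * (a - 1) := by
        rw [Finset.sum_const, Finset.card_range, nsmul_eq_mul]
      linarith
    rw [hηsum] at key
    linarith
  · rintro (h | h)
    · -- Case A : ∑ μ < ℓ d.  m = ℓ, η ≡ 1, a = 3, ζ = ℓμ - 1, b = ℓd - 3, μ' = 0, c = 0
      refine ⟨ℓ, by omega, fun _ => 1, 3, fun i => (ℓ : ℤ) * μ i - 1, (ℓ : ℤ) * d - 3,
        0, 0, ⟨fun i => le_refl 1, fun i => by simp only; norm_num, ?_⟩,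
        ⟨fun i => by simp only; have := hμ1 i; nlinarith, fun i => ?_, ?_⟩,
        ⟨fun i => le_refl 0, fun i => by norm_num, by simp⟩,
        fun i => by simp only [Pi.zero_apply]; ring, by ring⟩
      · rw [Finset.sum_const, hcard, nsmul_eq_mul]
        push_cast
        linarith
      · simp only
        have := hμ2 i
        nlinarith
      · have hsub : ∑ i : Fin (2 * ℓ + 1), ((ℓ : ℤ) * μ i - 1)
            = (ℓ : ℤ) * ∑ i, μ i - (2 * (ℓ : ℤ) + 1) := by
          rw [Finset.sum_sub_distrib, ← Finset.mul_sum, Finset.sum_const, hcard, nsmul_eq_mul]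
          push_cast; ring
        rw [hsub]
        have : ∑ i, μ i ≤ (ℓ : ℤ) * d - 1 := by linarith
        nlinarith
    · -- Case B : μ > 0. m = ℓ-2, η ≡ ℓ-1, a = 2ℓ-1, ζ = (ℓ-2)μ-(ℓ-1), b = (ℓ-2)d-(2ℓ-1)
      have hc2 : ((ℓ - 2 : ℕ) : ℤ) = (ℓ : ℤ) - 2 := by
        have : 2 ≤ ℓ := by omega
        push_cast [this]; ring
      refine ⟨ℓ - 2, by omega, fun _ => (ℓ : ℤ) - 1, 2 * (ℓ : ℤ) - 1,
        fun i => ((ℓ : ℤ) - 2) * μ i - ((ℓ : ℤ) - 1), ((ℓ : ℤ) - 2) * d - (2 * (ℓ : ℤ) - 1),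
        0, 0, ⟨fun i => by simp only; linarith, fun i => by simp only; linarith, ?_⟩,
        ⟨fun i => by simp only; have := h i; nlinarith, fun i => ?_, ?_⟩,
        ⟨fun i => le_refl 0, fun i => by norm_num, by simp⟩,
        fun i => by simp only [Pi.zero_apply]; rw [hc2]; ring, by rw [hc2]; ring⟩
      · rw [Finset.sum_const, hcard, nsmul_eq_mul]
        push_cast
        nlinarith
      · simp only
        have := hμ2 i
        nlinarith
      · have hsub : ∑ i : Fin (2 * ℓ + 1), (((ℓ : ℤ) - 2) * μ i - ((ℓ : ℤ) - 1))
            = ((ℓ : ℤ) - 2) * ∑ i, μ i - (2 * (ℓ : ℤ) + 1) * ((ℓ : ℤ) - 1) := by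
          rw [Finset.sum_sub_distrib, ← Finset.mul_sum, Finset.sum_const, hcard, nsmul_eq_mul]
          push_cast; ring
        rw [hsub]
        nlinarith [hμ3]
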